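/- arXiv:2109.00613 — 2 statements merged into one kernel-verified Lean document; each statement's English description precedes it below -/
import Mathlib

section
/- Let n ≥ 6 be even. Then there exists a set C of words of length n and weight 3 over Fin n such that any two distinct members of C have Hamming distance at least 4 and every 3-element subset of Fin n is the support of exactly one codeword of C; moreover, no such set of words exists over Fin q for any q ≤ n−1. (That is, q₀(3,n) = n for even n.) -/
/-- The weight of a word `x : Fin n → Fin q`: the number of nonzero coordinates. -/
def wt {n q : ℕ} (x : Fin n → Fin q) : ℕ :=
  (Finset.univ.filter fun i => (x i : ℕ) ≠ 0).card

/-- The support of a word `x : Fin n → Fin q`: the set of nonzero coordinates. -/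
def supp {n q : ℕ} (x : Fin n → Fin q) : Finset (Fin n) :=
  Finset.univ.filter fun i => (x i : ℕ) ≠ 0

/-- `C` is an `(n, w+1, w)_q` code with minimum Hamming distance `w + 1` in which
every `w`-element subset of `Fin n` is the support of exactly one codeword. -/
def IsPerfectSupportCode (n w q : ℕ) (C : Finset (Fin n → Fin q)) : Prop :=
  (∀ c ∈ C, wt c = w) ∧
  (∀ c₁ ∈ C, ∀ c₂ ∈ C, c₁ ≠ c₂ → w + 1 ≤ hammingDist c₁ c₂) ∧
  (∀ S : Finset (Fin n), S.card = w → ∃! c, c ∈ C ∧ supp c = S)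

/-- Proper edge coloring of `K_{m+1}` (vertices `0..m`, vertex `m` playing `∞`),
colors in `{1,...,m}`, for `m` odd. -/
def phi (m a b : ℕ) : ℕ :=
  if a = m then 2 * b % m + 1 else if b = m then 2 * a % m + 1 else (a + b) % m + 1

lemma phi_symm (m a b : ℕ) : phi m a b = phi m b a := by
  unfold phi
  rcases eq_or_ne a m with h | h <;> rcases eq_or_ne b m with h' | h' <;>
    simp [h, h', Nat.add_comm]

lemma phi_pos (m a b : ℕ) : 0 < phi m a b := by
  unfold phi; split <;> [omega; (split <;> omega)]

lemma phi_le (m a b : ℕ) (hm : 0 < m) : phi m a b ≤ m := by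
  unfold phi
  have h1 := Nat.mod_lt (2*b) hm
  have h2 := Nat.mod_lt (2*a) hm
  have h3 := Nat.mod_lt (a+b) hm
  split
  · omega
  · split <;> omega

lemma phi_inj (m a b b' : ℕ) (hm : Odd m) (ha : a ≤ m) (hb : b ≤ m) (hb' : b' ≤ m)
    (hab : a ≠ b) (hab' : a ≠ b') (hbb' : b ≠ b') : phi m a b ≠ phi m a b' := by
  have hm0 : 0 < m := hm.pos
  have hcop : Nat.gcd m 2 = 1 := (Nat.coprime_two_left.mpr hm).symm
  intro h
  unfold phi at h
  rcases eq_or_ne a m with haml | haml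
  · have hbm : b < m := lt_of_le_of_ne hb (by omega)
    have hb'm : b' < m := lt_of_le_of_ne hb' (by omega)
    rw [if_pos haml, if_pos haml] at h
    have h2 : 2 * b ≡ 2 * b' [MOD m] := by
      show 2 * b % m = 2 * b' % m
      omega
    have h3 := Nat.ModEq.cancel_left_of_coprime hcop h2
    have := h3.eq_of_lt_of_lt hbm hb'm
    omega
  · have ham' : a < m := lt_of_le_of_ne ha haml
    rw [if_neg haml, if_neg haml] at h
    rcases eq_or_ne b m with hbm | hbm
    · have hb'm : b' < m := lt_of_le_of_ne hb' (by omega)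
      rw [if_pos hbm, if_neg (by omega : ¬ b' = m)] at h
      have h2 : a + a ≡ a + b' [MOD m] := by
        rw [← two_mul]
        show 2 * a % m = (a + b') % m
        omega
      have := (Nat.ModEq.add_left_cancel' a h2).eq_of_lt_of_lt ham' hb'm
      omega
    · have hbm' : b < m := lt_of_le_of_ne hb hbm
      rw [if_neg hbm] at h
      rcases eq_or_ne b' m with hb'm | hb'm
      · rw [if_pos hb'm] at h
        have h2 : a + b ≡ a + a [MOD m] := by
          rw [← two_mul]
          show (a + b) % m = 2 * a % m
          omega
        have := (Nat.ModEq.add_left_cancel' a h2).eq_of_lt_of_lt hbm' ham'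
        omega
      · have hb'm' : b' < m := lt_of_le_of_ne hb' hb'm
        rw [if_neg hb'm] at h
        have h2 : a + b ≡ a + b' [MOD m] := by
          show (a + b) % m = (a + b') % m
          omega
        have := (Nat.ModEq.add_left_cancel' a h2).eq_of_lt_of_lt hbm' hb'm'
        exact hbb' this

lemma pair_min_max {α : Type*} [LinearOrder α] {P : Finset α} (h2 : P.card = 2) {x y : α}
    (hx : x ∈ P) (hy : y ∈ P) (hxy : x ≠ y) (hne : P.Nonempty) :
    (P.min' hne = x ∧ P.max' hne = y) ∨ (P.min' hne = y ∧ P.max' hne = x) := by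
  have hsub : ({x, y} : Finset α) ⊆ P := by
    intro z hz
    simp only [Finset.mem_insert, Finset.mem_singleton] at hz
    rcases hz with rfl | rfl <;> assumption
  have hxyc : ({x, y} : Finset α).card = 2 := by
    rw [Finset.card_insert_of_notMem (by simpa using hxy), Finset.card_singleton]
  have heq : P = {x, y} := (Finset.eq_of_subset_of_card_le hsub (by omega)).symm
  subst heq
  have hmin := Finset.min'_mem _ hne
  have hmax := Finset.max'_mem _ hne
  have hlt : Finset.min' _ hne < Finset.max' {x, y} hne :=
    Finset.min'_lt_max'_of_card _ (by omega)
  simp only [Finset.mem_insert, Finset.mem_singleton] at hmin hmax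
  rcases hmin with h1 | h1 <;> rcases hmax with h2 | h2
  · rw [h1, h2] at hlt; exact absurd rfl hlt.ne
  · exact Or.inl ⟨h1, h2⟩
  · exact Or.inr ⟨h1, h2⟩
  · rw [h1, h2] at hlt; exact absurd rfl hlt.ne

lemma erase_nonempty {n : ℕ} {S : Finset (Fin n)} (hS : S.card = 3) {i : Fin n}
    (hi : i ∈ S) : (S.erase i).Nonempty := by
  rw [← Finset.card_pos, Finset.card_erase_of_mem hi, hS]
  norm_num

/-- The codeword supported on `S`: at `i ∈ S`, the value is `phi (n-1)` of
the other two elements of `S`. -/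
def word (n : ℕ) (hn : 6 ≤ n) (S : Finset (Fin n)) (hS : S.card = 3) : Fin n → Fin n :=
  fun i =>
    if h : i ∈ S then
      ⟨phi (n-1) ((S.erase i).min' (erase_nonempty hS h)).val
        ((S.erase i).max' (erase_nonempty hS h)).val,
        by have := phi_le (n-1) ((S.erase i).min' (erase_nonempty hS h)).val
             ((S.erase i).max' (erase_nonempty hS h)).val (by omega); omega⟩
    else ⟨0, by omega⟩

lemma word_val_ne_zero {n : ℕ} {hn : 6 ≤ n} {S : Finset (Fin n)} {hS : S.card = 3}
    {i : Fin n} (hi : i ∈ S) : (word n hn S hS i).val ≠ 0 := by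
  simp only [word, dif_pos hi]
  have := phi_pos (n-1) ((S.erase i).min' (erase_nonempty hS hi)).val
    ((S.erase i).max' (erase_nonempty hS hi)).val
  omega

lemma word_val_zero {n : ℕ} {hn : 6 ≤ n} {S : Finset (Fin n)} {hS : S.card = 3}
    {i : Fin n} (hi : i ∉ S) : (word n hn S hS i).val = 0 := by
  simp only [word, dif_neg hi]

lemma word_supp {n : ℕ} (hn : 6 ≤ n) (S : Finset (Fin n)) (hS : S.card = 3) :
    supp (word n hn S hS) = S := by
  ext i
  simp only [supp, Finset.mem_filter, Finset.mem_univ, true_and]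
  constructor
  · intro h
    by_contra hi
    exact h (word_val_zero hi)
  · intro hi
    exact word_val_ne_zero hi

lemma word_val_eq {n : ℕ} (hn : 6 ≤ n) {S : Finset (Fin n)} (hS : S.card = 3)
    {i x y : Fin n} (hi : i ∈ S) (hx : x ∈ S.erase i) (hy : y ∈ S.erase i) (hxy : x ≠ y) :
    (word n hn S hS i).val = phi (n-1) x.val y.val := by
  have hcard : (S.erase i).card = 2 := by
    rw [Finset.card_erase_of_mem hi, hS]
  simp only [word, dif_pos hi]
  rcases pair_min_max hcard hx hy hxy (erase_nonempty hS hi) with ⟨h1, h2⟩ | ⟨h1, h2⟩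
  · rw [h1, h2]
  · rw [h1, h2, phi_symm]

lemma word_ne_of_val_ne {q : ℕ} {a b : Fin q} (h : a.val ≠ b.val) : a ≠ b :=
  fun hab => h (by rw [hab])

lemma word_dist {n : ℕ} (hn : 6 ≤ n) (heven : Even n) {S T : Finset (Fin n)}
    (hS : S.card = 3) (hT : T.card = 3) (hST : S ≠ T) :
    4 ≤ hammingDist (word n hn S hS) (word n hn T hT) := by
  classical
  have hodd : Odd (n - 1) := by
    obtain ⟨r, hr⟩ := heven
    exact ⟨r - 1, by omega⟩
  set c₁ := word n hn S hS with hc₁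
  set c₂ := word n hn T hT with hc₂
  have hdist : hammingDist c₁ c₂ = (Finset.univ.filter fun i => c₁ i ≠ c₂ i).card := rfl
  set D := Finset.univ.filter fun i => c₁ i ≠ c₂ i with hD
  have hSsub : S \ T ⊆ D := by
    intro i hi
    rw [Finset.mem_sdiff] at hi
    simp only [hD, Finset.mem_filter, Finset.mem_univ, true_and]
    exact word_ne_of_val_ne (by rw [word_val_zero hi.2]; exact word_val_ne_zero hi.1)
  have hTsub : T \ S ⊆ D := by
    intro i hi
    rw [Finset.mem_sdiff] at hi
    simp only [hD, Finset.mem_filter, Finset.mem_univ, true_and]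
    refine word_ne_of_val_ne (fun h => ?_)
    rw [word_val_zero hi.2] at h
    exact word_val_ne_zero hi.1 h.symm
  have hcS : (S \ T).card + (S ∩ T).card = 3 := by
    rw [Finset.card_sdiff_add_card_inter, hS]
  have hcT : (T \ S).card + (T ∩ S).card = 3 := by
    rw [Finset.card_sdiff_add_card_inter, hT]
  have hint : (S ∩ T).card ≤ 2 := by
    by_contra h
    have h3 : (S ∩ T).card = 3 := by
      have := Finset.card_le_card (Finset.inter_subset_left : S ∩ T ⊆ S)
      omega
    have : S ∩ T = S := Finset.eq_of_subset_of_card_le Finset.inter_subset_left (by omega)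
    have hTS : S ⊆ T := by rw [← this]; exact Finset.inter_subset_right
    exact hST (Finset.eq_of_subset_of_card_le hTS (by omega))
  have hint2 : (T ∩ S).card = (S ∩ T).card := by rw [Finset.inter_comm]
  rw [hdist]
  rcases Nat.lt_or_ge (S ∩ T).card 2 with hlt | hge
  · -- symmetric difference alone has ≥ 4 elements
    have hdisj : Disjoint (S \ T) (T \ S) := by
      rw [Finset.disjoint_left]
      intro a ha hb
      rw [Finset.mem_sdiff] at ha hb
      exact hb.2 ha.1
    have hsub : (S \ T) ∪ (T \ S) ⊆ D := Finset.union_subset hSsub hTsub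
    have := Finset.card_le_card hsub
    rw [Finset.card_union_of_disjoint hdisj] at this
    omega
  · -- |S ∩ T| = 2
    have h2 : (S ∩ T).card = 2 := le_antisymm hint hge
    -- the common pair differs as well
    have hIsub : S ∩ T ⊆ D := by
      intro i hi
      obtain ⟨a, b, hab, hab2⟩ := Finset.card_eq_two.mp h2
      -- j : the other common element
      have hiab : i = a ∨ i = b := by
        have := hi
        rw [hab2] at this
        simpa using this
      obtain ⟨j, hj, hji⟩ : ∃ j, j ∈ S ∩ T ∧ j ≠ i := by
        rcases hiab with rfl | rfl
        · exact ⟨b, by rw [hab2]; simp, fun h => hab h.symm⟩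
        · exact ⟨a, by rw [hab2]; simp, hab⟩
      obtain ⟨kS, hkS⟩ : (S \ T).Nonempty := by rw [← Finset.card_pos]; omega
      obtain ⟨kT, hkT⟩ : (T \ S).Nonempty := by rw [← Finset.card_pos]; omega
      rw [Finset.mem_sdiff] at hkS hkT
      rw [Finset.mem_inter] at hi hj
      have hval1 : (c₁ i).val = phi (n-1) j.val kS.val := by
        apply word_val_eq hn hS hi.1
        · exact Finset.mem_erase.mpr ⟨hji, hj.1⟩
        · exact Finset.mem_erase.mpr ⟨fun h => hkS.2 (h ▸ hi.2), hkS.1⟩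
        · exact fun h => hkS.2 (h ▸ hj.2)
      have hval2 : (c₂ i).val = phi (n-1) j.val kT.val := by
        apply word_val_eq hn hT hi.2
        · exact Finset.mem_erase.mpr ⟨hji, hj.2⟩
        · exact Finset.mem_erase.mpr ⟨fun h => hkT.2 (h ▸ hi.1), hkT.1⟩
        · exact fun h => hkT.2 (h ▸ hj.1)
      have hne : phi (n-1) j.val kS.val ≠ phi (n-1) j.val kT.val := by
        apply phi_inj _ _ _ _ hodd (by omega) (by omega) (by omega)
        · intro h
          have hh : j = kS := Fin.val_injective h
          exact hkS.2 (hh ▸ hj.2)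
        · intro h
          have hh : j = kT := Fin.val_injective h
          exact hkT.2 (hh ▸ hj.1)
        · intro h
          have hh : kS = kT := Fin.val_injective h
          exact hkT.2 (hh ▸ hkS.1)
      simp only [hD, Finset.mem_filter, Finset.mem_univ, true_and]
      exact word_ne_of_val_ne (by rw [hval1, hval2]; exact hne)
    have hsub : S ∪ T ⊆ D := by
      intro i hi
      rcases Finset.mem_union.mp hi with h | h
      · by_cases hiT : i ∈ T
        · exact hIsub (Finset.mem_inter.mpr ⟨h, hiT⟩)
        · exact hSsub (Finset.mem_sdiff.mpr ⟨h, hiT⟩)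
      · by_cases hiS : i ∈ S
        · exact hIsub (Finset.mem_inter.mpr ⟨hiS, h⟩)
        · exact hTsub (Finset.mem_sdiff.mpr ⟨h, hiS⟩)
    have hcard : (S ∪ T).card = 4 := by
      have := Finset.card_union_add_card_inter S T
      omega
    have := Finset.card_le_card hsub
    omega

def code (n : ℕ) (hn : 6 ≤ n) : Finset (Fin n → Fin n) :=
  (Finset.univ.powersetCard 3).attach.image
    (fun S => word n hn S.1 (by
      have := S.2
      rwa [Finset.mem_powersetCard_univ] at this))

lemma mem_code {n : ℕ} (hn : 6 ≤ n) {c : Fin n → Fin n} :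
    c ∈ code n hn ↔ ∃ (S : Finset (Fin n)) (hS : S.card = 3), c = word n hn S hS := by
  constructor
  · intro h
    rw [code, Finset.mem_image] at h
    obtain ⟨S, _, hSc⟩ := h
    exact ⟨S.1, _, hSc.symm⟩
  · rintro ⟨S, hS, rfl⟩
    rw [code, Finset.mem_image]
    refine ⟨⟨S, Finset.mem_powersetCard_univ.mpr hS⟩, Finset.mem_attach _ _, rfl⟩

lemma exists_code {n : ℕ} (hn : 6 ≤ n) (heven : Even n) :
    IsPerfectSupportCode n 3 n (code n hn) := by
  refine ⟨?_, ?_, ?_⟩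
  · intro c hc
    obtain ⟨S, hS, rfl⟩ := (mem_code hn).mp hc
    show (supp _).card = 3
    rw [word_supp, hS]
  · intro c₁ h₁ c₂ h₂ hne
    obtain ⟨S, hS, rfl⟩ := (mem_code hn).mp h₁
    obtain ⟨T, hT, rfl⟩ := (mem_code hn).mp h₂
    have hST : S ≠ T := by
      rintro rfl
      exact hne (by rfl)
    exact word_dist hn heven hS hT hST
  · intro S hS
    refine ⟨word n hn S hS, ⟨(mem_code hn).mpr ⟨S, hS, rfl⟩, word_supp hn S hS⟩, ?_⟩
    rintro c ⟨hc, hsupp⟩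
    obtain ⟨T, hT, rfl⟩ := (mem_code hn).mp hc
    rw [word_supp] at hsupp
    subst hsupp
    rfl

lemma triple_card {n : ℕ} {i j k : Fin n} (hij : i ≠ j) (hik : i ≠ k) (hjk : j ≠ k) :
    ({i, j, k} : Finset (Fin n)).card = 3 := by
  rw [Finset.card_insert_of_notMem (by simp [hij, hik]),
    Finset.card_insert_of_notMem (by simp [hjk]), Finset.card_singleton]

lemma no_code {n : ℕ} (hn : 6 ≤ n) (heven : Even n) {q : ℕ} (hq : q ≤ n - 1)
    (C : Finset (Fin n → Fin q)) (hC : IsPerfectSupportCode n 3 q C) : False := by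
  classical
  obtain ⟨hwt, hdist, huniq⟩ := hC
  -- alphabet must have at least two symbols
  have hq2 : 2 ≤ q := by
    obtain ⟨S₀, -, hS₀⟩ := Finset.exists_subset_card_eq (s := (Finset.univ : Finset (Fin n)))
      (show 3 ≤ (Finset.univ : Finset (Fin n)).card by simp; omega)
    obtain ⟨c₀, ⟨hc₀C, hc₀s⟩, -⟩ := huniq S₀ hS₀
    have h3 : (supp c₀).card = 3 := by rw [hc₀s, hS₀]
    have : (supp c₀).Nonempty := by rw [← Finset.card_pos]; omega
    obtain ⟨i₀, hi₀⟩ := this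
    rw [supp, Finset.mem_filter] at hi₀
    have := (c₀ i₀).isLt
    omega
  haveI : Nonempty (Fin q) := ⟨⟨0, by omega⟩⟩
  choose! cw hcw using fun (S : Finset (Fin n)) (hS : S.card = 3) => huniq S hS
  have hcwC : ∀ S, S.card = 3 → cw S ∈ C := fun S hS => (hcw S hS).1.1
  have hcwsupp : ∀ S, S.card = 3 → supp (cw S) = S := fun S hS => (hcw S hS).1.2
  -- fixed coordinate
  set i : Fin n := ⟨0, by omega⟩ with hi_def
  -- key: values at the common coordinate differ
  have key : ∀ j k k' : Fin n, i ≠ j → i ≠ k → i ≠ k' → j ≠ k → j ≠ k' → k ≠ k' →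
      cw {i, j, k} i ≠ cw {i, j, k'} i := by
    intro j k k' hij hik hik' hjk hjk' hkk'
    have h₁ : ({i, j, k} : Finset (Fin n)).card = 3 := triple_card hij hik hjk
    have h₂ : ({i, j, k'} : Finset (Fin n)).card = 3 := triple_card hij hik' hjk'
    set c₁ := cw {i, j, k}
    set c₂ := cw {i, j, k'}
    have hs₁ : supp c₁ = {i, j, k} := hcwsupp _ h₁
    have hs₂ : supp c₂ = {i, j, k'} := hcwsupp _ h₂
    have hne : c₁ ≠ c₂ := by
      intro h
      have : k ∈ supp c₂ := by rw [← h, hs₁]; simp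
      rw [hs₂] at this
      simp only [Finset.mem_insert, Finset.mem_singleton] at this
      rcases this with h' | h' | h'
      · exact hik h'.symm
      · exact hjk h'.symm
      · exact hkk' h'
    have hd : 4 ≤ hammingDist c₁ c₂ := hdist c₁ (hcwC _ h₁) c₂ (hcwC _ h₂) hne
    set D := Finset.univ.filter fun a => c₁ a ≠ c₂ a with hD
    have hdd : hammingDist c₁ c₂ = D.card := rfl
    set U : Finset (Fin n) := {i, j, k, k'} with hU
    have hDU : D ⊆ U := by
      intro a ha
      simp only [hD, Finset.mem_filter, Finset.mem_univ, true_and] at ha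
      by_contra haU
      apply ha
      have h1 : a ∉ supp c₁ := by
        rw [hs₁]
        intro hmem
        apply haU
        simp only [hU, Finset.mem_insert, Finset.mem_singleton] at hmem ⊢
        tauto
      have h2 : a ∉ supp c₂ := by
        rw [hs₂]
        intro hmem
        apply haU
        simp only [hU, Finset.mem_insert, Finset.mem_singleton] at hmem ⊢
        tauto
      rw [supp, Finset.mem_filter] at h1 h2
      push_neg at h1 h2
      have v1 := h1 (Finset.mem_univ a)
      have v2 := h2 (Finset.mem_univ a)
      exact Fin.val_injective (by omega)
    have hUcard : U.card ≤ 4 := by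
      refine le_trans (Finset.card_insert_le _ _) ?_
      refine Nat.succ_le_succ (le_trans (Finset.card_insert_le _ _) ?_)
      refine Nat.succ_le_succ (le_trans (Finset.card_insert_le _ _) ?_)
      simp
    have hEq : D = U := Finset.eq_of_subset_of_card_le hDU (by omega)
    have : i ∈ D := by rw [hEq]; simp [hU]
    simp only [hD, Finset.mem_filter, Finset.mem_univ, true_and] at this
    exact this
  -- value at i is nonzero
  have hnz : ∀ j k : Fin n, i ≠ j → i ≠ k → j ≠ k → (cw {i, j, k} i).val ≠ 0 := by
    intro j k hij hik hjk
    have h₁ := hcwsupp _ (triple_card hij hik hjk)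
    have : i ∈ supp (cw {i, j, k}) := by rw [h₁]; simp
    rw [supp, Finset.mem_filter] at this
    exact this.2
  -- for each j ≠ i, the map k ↦ cw {i,j,k} i is a bijection onto nonzero symbols
  set N : Finset (Fin q) := Finset.univ.filter fun a => a.val ≠ 0 with hN
  have hNcard : N.card = q - 1 := by
    have hz : N = Finset.univ.erase ⟨0, by omega⟩ := by
      ext a
      simp only [hN, Finset.mem_filter, Finset.mem_univ, true_and, and_true,
        Finset.mem_erase, Ne, Fin.ext_iff]
    rw [hz, Finset.card_erase_of_mem (Finset.mem_univ _), Finset.card_univ,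
      Fintype.card_fin]
  set s : Fin q := ⟨1, by omega⟩ with hs_def
  have hsN : s ∈ N := by simp [hN, hs_def]
  have hbij : ∀ j : Fin n, i ≠ j → ∃ k, (i ≠ k ∧ j ≠ k) ∧ cw {i, j, k} i = s := by
    intro j hij
    set Dom : Finset (Fin n) := (Finset.univ.erase i).erase j with hDom
    have hDomcard : Dom.card = n - 2 := by
      rw [hDom, Finset.card_erase_of_mem (by simp [hij.symm]),
        Finset.card_erase_of_mem (by simp), Finset.card_univ, Fintype.card_fin]
      omega
    have hmemDom : ∀ k, k ∈ Dom ↔ (i ≠ k ∧ j ≠ k) := by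
      intro k
      simp only [hDom, Finset.mem_erase, Finset.mem_univ, and_true]
      constructor
      · rintro ⟨h1, h2⟩; exact ⟨fun h => h2 h.symm, fun h => h1 h.symm⟩
      · rintro ⟨h1, h2⟩; exact ⟨fun h => h2 h.symm, fun h => h1 h.symm⟩
    have hinj : Set.InjOn (fun k => cw {i, j, k} i) Dom := by
      intro k hk k' hk' hEq
      by_contra hkk'
      rw [Finset.mem_coe, hmemDom] at hk hk'
      exact key j k k' hij hk.1 hk'.1 hk.2 hk'.2 hkk' hEq
    have hmaps : ∀ k ∈ Dom, cw {i, j, k} i ∈ N := by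
      intro k hk
      rw [hmemDom] at hk
      simp only [hN, Finset.mem_filter, Finset.mem_univ, true_and]
      exact hnz j k hij hk.1 hk.2
    have himage : Dom.image (fun k => cw {i, j, k} i) ⊆ N := by
      intro a ha
      rw [Finset.mem_image] at ha
      obtain ⟨k, hk, rfl⟩ := ha
      exact hmaps k hk
    have hicard : (Dom.image (fun k => cw {i, j, k} i)).card = n - 2 := by
      rw [Finset.card_image_of_injOn hinj, hDomcard]
    have hNsub : N ⊆ Dom.image (fun k => cw {i, j, k} i) := by
      apply Finset.subset_of_eq
      symm
      apply Finset.eq_of_subset_of_card_le himage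
      omega
    have := hNsub hsN
    rw [Finset.mem_image] at this
    obtain ⟨k, hk, hks⟩ := this
    rw [hmemDom] at hk
    exact ⟨k, hk, hks⟩
  choose! σ hσdom hσval using hbij
  have hσinv : ∀ j : Fin n, i ≠ j → σ (σ j) = j := by
    intro j hij
    set j' := σ j with hj'
    have hd := hσdom j hij
    have hv := hσval j hij
    have hij' : i ≠ j' := hd.1
    have hd2 := hσdom j' hij'
    have hv2 := hσval j' hij'
    -- uniqueness of the preimage of s for the pair (i, j')
    have hsets : ({i, j', j} : Finset (Fin n)) = {i, j, j'} := by
      ext a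
      simp only [Finset.mem_insert, Finset.mem_singleton]
      tauto
    have hvj : cw {i, j', j} i = s := by rw [hsets]; exact hv
    by_contra hne
    have := key j' (σ j') j hij' hd2.1 hij hd2.2
      (fun h => hd.2 h.symm) hne
    rw [hv2, hvj] at this
    exact this rfl
  -- parity contradiction: σ is a fixed-point-free involution on a set of odd size
  set A : Finset (Fin n) := Finset.univ.erase i with hA
  have hAcard : A.card = n - 1 := by
    rw [hA, Finset.card_erase_of_mem (by simp), Finset.card_univ, Fintype.card_fin]
  have hmemA : ∀ j, j ∈ A ↔ i ≠ j := by
    intro j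
    simp only [hA, Finset.mem_erase, Finset.mem_univ, and_true]
    exact ⟨fun h => fun h' => h h'.symm, fun h => fun h' => h h'.symm⟩
  set P : Finset (Fin n) := A.filter fun j => j < σ j with hP
  set P' : Finset (Fin n) := A.filter fun j => σ j < j with hP'
  have hsplit : P.card + P'.card = A.card := by
    have := Finset.card_filter_add_card_filter_not
      (s := A) (p := fun j => j < σ j)
    have hPP' : (A.filter fun j => ¬ j < σ j) = P' := by
      ext j
      simp only [Finset.mem_filter, hP']
      constructor
      · rintro ⟨hj, hlt⟩
        refine ⟨hj, lt_of_le_of_ne (not_lt.mp hlt) ?_⟩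
        intro h
        exact (hσdom j ((hmemA j).mp hj)).2 h.symm
      · rintro ⟨hj, hlt⟩
        exact ⟨hj, not_lt.mpr hlt.le⟩
    rw [hPP'] at this
    exact this
  have hcardeq : P.card = P'.card := by
    apply Finset.card_bij (fun j _ => σ j)
    · intro j hj
      simp only [hP, Finset.mem_filter] at hj
      have hij := (hmemA j).mp hj.1
      simp only [hP', Finset.mem_filter]
      refine ⟨(hmemA (σ j)).mpr (hσdom j hij).1, ?_⟩
      rw [hσinv j hij]
      exact hj.2
    · intro a ha b hb hEq
      simp only [hP, Finset.mem_filter] at ha hb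
      have := hσinv a ((hmemA a).mp ha.1)
      rw [hEq, hσinv b ((hmemA b).mp hb.1)] at this
      exact this.symm
    · intro j' hj'
      simp only [hP', Finset.mem_filter] at hj'
      have hij' := (hmemA j').mp hj'.1
      refine ⟨σ j', ?_, (hσinv j' hij').symm ▸ rfl⟩
      simp only [hP, Finset.mem_filter]
      refine ⟨(hmemA (σ j')).mpr (hσdom j' hij').1, ?_⟩
      rw [hσinv j' hij']
      exact hj'.2
  obtain ⟨r, hr⟩ := heven
  omega


/-- For even `n ≥ 6`, the smallest alphabet size admitting an `(n,4,3)_q` code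
with a codeword on every `3`-subset is `q₀(3,n) = n`. -/
theorem q0_three_even (n : ℕ) (hn : 6 ≤ n) (heven : Even n) :
    (∃ C : Finset (Fin n → Fin n), IsPerfectSupportCode n 3 n C) ∧
    (∀ q : ℕ, q ≤ n - 1 → ¬ ∃ C : Finset (Fin n → Fin q), IsPerfectSupportCode n 3 q C) := by
  refine ⟨⟨code n hn, exists_code hn heven⟩, ?_⟩
  rintro q hq ⟨C, hC⟩
  exact no_code hn heven hq C hC
end

section
/- Let q ≥ 3 and let n, d, w be integers with 2 ≤ d < w < n. If there exists an (n,d,w)_q MOA-CW code, then there exists an (n−1, d, w)_q MOA-CW code, and there also exists an (n−1, d−1, w−1)_q MOA-CW code. -/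
/-- `C` is an `(n,d,w)_q` MOA-CW code: a constant-weight code of length `n` and
weight `w` over `Fin q` with minimum Hamming distance `d` such that for every
`w`-element subset `S` of `Fin n`, every `(w-d+1)`-element subset `T` of `S`,
and every assignment of nonzero values to the coordinates of `T`, there is
exactly one codeword with support `S` agreeing with that assignment on `T`. -/
def IsMOACW (n d w q : ℕ) (C : Finset (Fin n → Fin q)) : Prop :=
  (∀ c ∈ C, wt c = w) ∧
  (∀ c₁ ∈ C, ∀ c₂ ∈ C, c₁ ≠ c₂ → d ≤ hammingDist c₁ c₂) ∧
  (∀ S : Finset (Fin n), S.card = w → ∀ T ⊆ S, T.card = w - d + 1 →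
    ∀ a : Fin n → Fin q, (∀ i ∈ T, (a i : ℕ) ≠ 0) →
      ∃! c, c ∈ C ∧ supp c = S ∧ ∀ i ∈ T, c i = a i)

lemma card_filter_fin_succ {m : ℕ} (P : Fin (m+1) → Prop) [DecidablePred P] :
    (Finset.univ.filter P).card
      = (Finset.univ.filter fun i : Fin m => P i.castSucc).card
        + (if P (Fin.last m) then 1 else 0) := by
  rw [Finset.card_filter, Finset.card_filter, Fin.sum_univ_castSucc]

def emb (m : ℕ) : Fin m ↪ Fin (m+1) := ⟨Fin.castSucc, Fin.castSucc_injective m⟩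

lemma wt_succ {m q : ℕ} (c : Fin (m+1) → Fin q) :
    wt c = wt (Fin.init c) + (if (c (Fin.last m) : ℕ) ≠ 0 then 1 else 0) := by
  unfold wt Fin.init
  exact card_filter_fin_succ _

lemma hdist_succ {m q : ℕ} (c₁ c₂ : Fin (m+1) → Fin q) :
    hammingDist c₁ c₂ = hammingDist (Fin.init c₁) (Fin.init c₂)
      + (if c₁ (Fin.last m) ≠ c₂ (Fin.last m) then 1 else 0) := by
  unfold hammingDist Fin.init
  exact card_filter_fin_succ _

lemma mem_supp {n q : ℕ} {x : Fin n → Fin q} {i : Fin n} :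
    i ∈ supp x ↔ (x i : ℕ) ≠ 0 := by simp [supp]

lemma last_not_mem_map {m : ℕ} (S : Finset (Fin m)) :
    Fin.last m ∉ S.map (emb m) := by
  simp only [Finset.mem_map, not_exists]
  rintro j ⟨_, hj⟩
  exact absurd hj (Fin.castSucc_lt_last j).ne

lemma supp_of_last_zero {m q : ℕ} {c : Fin (m+1) → Fin q}
    (h : (c (Fin.last m) : ℕ) = 0) :
    supp c = (supp (Fin.init c)).map (emb m) := by
  ext i
  induction i using Fin.lastCases with
  | last =>
      simp only [mem_supp, h, ne_eq, not_true_eq_false, false_iff]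
      exact last_not_mem_map _
  | cast j =>
      simp only [Finset.mem_map, mem_supp, Fin.init]
      constructor
      · intro hj; exact ⟨j, hj, rfl⟩
      · rintro ⟨k, hk, hkj⟩
        have : k = j := (emb m).injective hkj
        subst this; exact hk

lemma supp_of_last_ne {m q : ℕ} {c : Fin (m+1) → Fin q}
    (h : (c (Fin.last m) : ℕ) ≠ 0) :
    supp c = insert (Fin.last m) ((supp (Fin.init c)).map (emb m)) := by
  ext i
  induction i using Fin.lastCases with
  | last => simp [mem_supp, h]
  | cast j =>
      simp only [Finset.mem_map, mem_supp, Finset.mem_insert, Fin.init]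
      constructor
      · intro hj; exact Or.inr ⟨j, hj, rfl⟩
      · rintro (hj | ⟨k, hk, hkj⟩)
        · exact absurd hj.symm (Fin.castSucc_lt_last j).ne'
        · have : k = j := (emb m).injective hkj
          subst this; exact hk

lemma eq_of_init_eq {m q : ℕ} {u v : Fin (m+1) → Fin q}
    (h : Fin.init u = Fin.init v) (hl : u (Fin.last m) = v (Fin.last m)) : u = v := by
  funext i
  induction i using Fin.lastCases with
  | last => exact hl
  | cast j => exact congrFun h j

/-- From an `(n,d,w)_q` MOA-CW code one obtains an `(n-1,d,w)_q` MOA-CW code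
and an `(n-1,d-1,w-1)_q` MOA-CW code. -/
theorem moacw_derived (n d w q : ℕ) (hq : 3 ≤ q) (hd : 2 ≤ d) (hdw : d < w)
    (hw : w < n) (h : ∃ C : Finset (Fin n → Fin q), IsMOACW n d w q C) :
    (∃ C₁ : Finset (Fin (n - 1) → Fin q), IsMOACW (n - 1) d w q C₁) ∧
    (∃ C₂ : Finset (Fin (n - 1) → Fin q), IsMOACW (n - 1) (d - 1) (w - 1) q C₂) := by
  haveI : NeZero q := ⟨by omega⟩
  obtain ⟨C, hwtC, hdistC, hOA⟩ := h
  obtain ⟨m, rfl⟩ : ∃ m, n = m + 1 := ⟨n - 1, by omega⟩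
  constructor
  · -- (n-1, d, w) code: codewords vanishing at the last coordinate
    refine ⟨(C.filter fun c => (c (Fin.last m) : ℕ) = 0).image Fin.init, ?_, ?_, ?_⟩
    · rintro c₁ hc₁
      obtain ⟨c, hc, rfl⟩ := Finset.mem_image.1 hc₁
      obtain ⟨hcC, hcl⟩ := Finset.mem_filter.1 hc
      have := wt_succ c
      rw [hwtC c hcC] at this
      simp [hcl] at this
      omega
    · rintro c₁ hc₁ c₂ hc₂ hne
      obtain ⟨u, hu, rfl⟩ := Finset.mem_image.1 hc₁
      obtain ⟨v, hv, rfl⟩ := Finset.mem_image.1 hc₂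
      obtain ⟨huC, hul⟩ := Finset.mem_filter.1 hu
      obtain ⟨hvC, hvl⟩ := Finset.mem_filter.1 hv
      have hlast : u (Fin.last m) = v (Fin.last m) := Fin.val_injective (by rw [hul, hvl])
      have huv : u ≠ v := fun e => hne (by rw [e])
      have := hdist_succ u v
      simp [hlast] at this
      rw [← this]
      exact hdistC u huC v hvC huv
    · intro S' hS' T' hTS' hT' a' ha'
      set S : Finset (Fin (m+1)) := S'.map (emb m) with hSdef
      set T : Finset (Fin (m+1)) := T'.map (emb m) with hTdef
      have hScard : S.card = w := by rw [Finset.card_map]; exact hS'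
      have hTcard : T.card = w - d + 1 := by rw [Finset.card_map]; exact hT'
      have hTS : T ⊆ S := Finset.map_subset_map.2 hTS'
      have haa : ∀ i ∈ T, ((Fin.snoc a' 0 : Fin (m+1) → Fin q) i : ℕ) ≠ 0 := by
        rintro i hi
        obtain ⟨j, hj, rfl⟩ := Finset.mem_map.1 hi
        rw [show (emb m) j = j.castSucc from rfl, Fin.snoc_castSucc]
        exact ha' j hj
      obtain ⟨c, ⟨hcC, hcs, hca⟩, hcu⟩ := hOA S hScard T hTS hTcard _ haa
      have hcl : (c (Fin.last m) : ℕ) = 0 := by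
        by_contra hne0
        have hmem : Fin.last m ∈ supp c := mem_supp.2 hne0
        rw [hcs] at hmem
        exact last_not_mem_map S' hmem
      have hcinit : supp (Fin.init c) = S' :=
        Finset.map_injective (emb m) (by rw [← supp_of_last_zero hcl, hcs])
      refine ⟨Fin.init c, ⟨Finset.mem_image.2 ⟨c, Finset.mem_filter.2 ⟨hcC, hcl⟩, rfl⟩,
        hcinit, ?_⟩, ?_⟩
      · intro j hj
        have := hca j.castSucc (Finset.mem_map.2 ⟨j, hj, rfl⟩)
        rwa [Fin.snoc_castSucc] at this
      · rintro c₁ ⟨hc₁, hc₁s, hc₁a⟩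
        obtain ⟨c', hc', rfl⟩ := Finset.mem_image.1 hc₁
        obtain ⟨hc'C, hc'l⟩ := Finset.mem_filter.1 hc'
        have : c' = c := by
          refine hcu c' ⟨hc'C, ?_, ?_⟩
          · rw [supp_of_last_zero hc'l, hc₁s]
          · rintro i hi
            obtain ⟨j, hj, rfl⟩ := Finset.mem_map.1 hi
            rw [show (emb m) j = j.castSucc from rfl, Fin.snoc_castSucc]
            exact hc₁a j hj
        rw [this]
  · -- (n-1, d-1, w-1) code: codewords nonzero at the last coordinate
    refine ⟨(C.filter fun c => (c (Fin.last m) : ℕ) ≠ 0).image Fin.init, ?_, ?_, ?_⟩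
    · rintro c₁ hc₁
      obtain ⟨c, hc, rfl⟩ := Finset.mem_image.1 hc₁
      obtain ⟨hcC, hcl⟩ := Finset.mem_filter.1 hc
      have := wt_succ c
      rw [hwtC c hcC] at this
      simp [hcl] at this
      omega
    · rintro c₁ hc₁ c₂ hc₂ hne
      obtain ⟨u, hu, rfl⟩ := Finset.mem_image.1 hc₁
      obtain ⟨v, hv, rfl⟩ := Finset.mem_image.1 hc₂
      obtain ⟨huC, _⟩ := Finset.mem_filter.1 hu
      obtain ⟨hvC, _⟩ := Finset.mem_filter.1 hv
      have huv : u ≠ v := fun e => hne (by rw [e])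
      have hd2 := hdistC u huC v hvC huv
      have := hdist_succ u v
      have hle : hammingDist u v ≤ hammingDist (Fin.init u) (Fin.init v) + 1 := by
        rw [this]; split <;> omega
      omega
    · intro S' hS' T' hTS' hT' a' ha'
      set S : Finset (Fin (m+1)) := insert (Fin.last m) (S'.map (emb m)) with hSdef
      set T : Finset (Fin (m+1)) := T'.map (emb m) with hTdef
      have hlastS : Fin.last m ∉ S'.map (emb m) := last_not_mem_map S'
      have hScard : S.card = w := by
        rw [Finset.card_insert_of_notMem hlastS, Finset.card_map, hS']
        omega
      have hTcard : T.card = w - d + 1 := by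
        rw [Finset.card_map, hT']; omega
      have hTS : T ⊆ S :=
        (Finset.map_subset_map.2 hTS').trans (Finset.subset_insert _ _)
      have haa : ∀ i ∈ T, ((Fin.snoc a' 0 : Fin (m+1) → Fin q) i : ℕ) ≠ 0 := by
        rintro i hi
        obtain ⟨j, hj, rfl⟩ := Finset.mem_map.1 hi
        rw [show (emb m) j = j.castSucc from rfl, Fin.snoc_castSucc]
        exact ha' j hj
      obtain ⟨c, ⟨hcC, hcs, hca⟩, hcu⟩ := hOA S hScard T hTS hTcard _ haa
      have hcl : (c (Fin.last m) : ℕ) ≠ 0 := by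
        have : Fin.last m ∈ supp c := hcs ▸ Finset.mem_insert_self _ _
        exact mem_supp.1 this
      have hcinit : supp (Fin.init c) = S' := by
        have h1 : insert (Fin.last m) ((supp (Fin.init c)).map (emb m))
            = insert (Fin.last m) (S'.map (emb m)) := by
          rw [← supp_of_last_ne hcl, hcs]
        have h2 := congrArg (fun s => Finset.erase s (Fin.last m)) h1
        simp only [Finset.erase_insert (last_not_mem_map _),
          Finset.erase_insert hlastS] at h2
        exact Finset.map_injective (emb m) h2
      refine ⟨Fin.init c, ⟨Finset.mem_image.2 ⟨c, Finset.mem_filter.2 ⟨hcC, hcl⟩, rfl⟩,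
        hcinit, ?_⟩, ?_⟩
      · intro j hj
        have := hca j.castSucc (Finset.mem_map.2 ⟨j, hj, rfl⟩)
        rwa [Fin.snoc_castSucc] at this
      · rintro c₁ ⟨hc₁, hc₁s, hc₁a⟩
        obtain ⟨c', hc', rfl⟩ := Finset.mem_image.1 hc₁
        obtain ⟨hc'C, hc'l⟩ := Finset.mem_filter.1 hc'
        have : c' = c := by
          refine hcu c' ⟨hc'C, ?_, ?_⟩
          · rw [supp_of_last_ne hc'l, hc₁s]
          · rintro i hi
            obtain ⟨j, hj, rfl⟩ := Finset.mem_map.1 hi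
            rw [show (emb m) j = j.castSucc from rfl, Fin.snoc_castSucc]
            exact hc₁a j hj
        rw [this]
end
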